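/- Let q be an odd prime power. The number of pairs (B, F) where B ∈ F_{q²}, A ∈ F_q, F(T) = (T−A)(T−B)(T−B^q) has coefficients S = A + B + B^q, R = AB + AB^q + B^{q+1}, P = AB^{q+1}, and (S−P)² + 8P − 4R is a nonzero square in F_q, equals (q³ − 2q² + 2q + 3)/2. -/

import Mathlib

open Finset
open scoped Classical

section Counting
variable {F : Type*} [Field F] [Fintype F]

lemma natCard_filter {α : Type*} [Fintype α] (P : α → Prop) [DecidablePred P] :
    Nat.card {x : α // P x} = #(univ.filter P) := by
  rw [Nat.card_eq_fintype_card, Fintype.card_subtype]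

lemma natCard_prod_split {α β : Type*} [Fintype α] [Fintype β] (P : α × β → Prop) :
    Nat.card {x : α × β // P x} = ∑ a : α, Nat.card {b : β // P (a, b)} := by
  classical
  rw [natCard_filter, Finset.card_filter, Fintype.sum_prod_type]
  refine Finset.sum_congr rfl fun a _ => ?_
  rw [natCard_filter, Finset.card_filter]

/-- affine equivalence -/
def affEquiv (a b : F) (ha : a ≠ 0) : F ≃ F where
  toFun x := a * x + b
  invFun y := (y - b) / a
  left_inv x := by field_simp; ring
  right_inv y := by field_simp; ring

lemma card_sq_eq (h2 : (2:F) ≠ 0) (δ : F) :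
    Nat.card {x : F // x^2 = δ} = if δ = 0 then 1 else if IsSquare δ then 2 else 0 := by
  classical
  split_ifs with h0 hsq
  · subst h0
    rw [natCard_filter]
    have h : (univ.filter fun x : F => x^2 = 0) = {0} := by
      ext x; simp [pow_eq_zero_iff]
    rw [h, card_singleton]
  · obtain ⟨s, hs⟩ := hsq
    have hs' : δ = s^2 := by rw [hs]; ring
    have hsne : s ≠ 0 := by
      rintro rfl
      exact h0 (by rw [hs']; ring)
    rw [natCard_filter]
    have h : (univ.filter fun x : F => x^2 = δ) = {s, -s} := by
      ext x
      simp only [mem_filter, mem_univ, true_and, mem_insert, mem_singleton]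
      constructor
      · intro h
        have hfac : (x - s) * (x + s) = 0 := by linear_combination h + hs'
        rcases mul_eq_zero.mp hfac with h' | h'
        · left; exact sub_eq_zero.mp h'
        · right; exact eq_neg_of_add_eq_zero_left h'
      · rintro (rfl | rfl) <;> [rw [hs']; rw [hs']] <;> ring
    rw [h, card_insert_of_notMem, card_singleton]
    simp only [mem_singleton]
    intro hc
    have : 2 * s = 0 := by linear_combination hc
    rcases mul_eq_zero.mp this with h' | h'
    · exact h2 h'
    · exact hsne h'
  · rw [natCard_filter]
    have h : (univ.filter fun x : F => x^2 = δ) = ∅ := by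
      ext x
      simp only [mem_filter, mem_univ, true_and, notMem_empty, iff_false]
      intro h
      exact hsq ⟨x, by rw [← h]; ring⟩
    rw [h, card_empty]

lemma card_mul_eq_ne (γ : F) (hγ : γ ≠ 0) :
    Nat.card {x : F × F // x.1 * x.2 = γ} = Fintype.card F - 1 := by
  classical
  have e : {x : F × F // x.1 * x.2 = γ} ≃ {a : F // ¬ a = 0} :=
  { toFun := fun x => ⟨x.1.1, fun h => hγ (by rw [← x.2, h, zero_mul])⟩
    invFun := fun a => ⟨(a.1, γ / a.1), by
      have h := a.2
      field_simp⟩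
    left_inv := fun x => by
      have h1 : x.1.1 ≠ 0 := fun h => hγ (by rw [← x.2, h, zero_mul])
      apply Subtype.ext
      have := x.2
      ext
      · rfl
      · simp only
        field_simp
        rw [mul_comm]; linear_combination -this
    right_inv := fun a => rfl }
  rw [Nat.card_congr e, Nat.card_eq_fintype_card, Fintype.card_subtype_compl,
    Fintype.card_subtype_eq]

lemma card_mul_eq_zero :
    Nat.card {x : F × F // x.1 * x.2 = 0} = 2 * Fintype.card F - 1 := by
  classical
  rw [natCard_filter]
  have h : (univ.filter fun x : F × F => x.1 * x.2 = 0)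
      = ({0} ×ˢ univ) ∪ (univ ×ˢ {0}) := by
    ext x
    simp only [mem_filter, mem_univ, true_and, mem_union, mem_product, mem_singleton,
      mul_eq_zero]
    tauto
  rw [h, card_union]
  have h1 : #(({0} : Finset F) ×ˢ (univ : Finset F)) = Fintype.card F := by simp
  have h2 : #((univ : Finset F) ×ˢ ({0} : Finset F)) = Fintype.card F := by simp
  have h3 : (({0} : Finset F) ×ˢ (univ : Finset F)) ∩ ((univ : Finset F) ×ˢ ({0} : Finset F))
      = {(0,0)} := by
    ext x
    simp only [mem_inter, mem_product, mem_singleton, mem_univ, true_and, and_true]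
    constructor
    · rintro ⟨h1', h2'⟩; exact Prod.ext h1' h2'
    · rintro rfl; exact ⟨rfl, rfl⟩
  rw [h1, h2, h3]
  have : 1 ≤ Fintype.card F := Fintype.card_pos
  simp only [card_singleton]
  omega

/-- change of variables for the conic -/
def conicEquiv (e β : F) (he : e ≠ 0) (h2 : (2:F) ≠ 0) : F × F ≃ F × F where
  toFun x := (x.2 - (e * x.1 + β), x.2 + (e * x.1 + β))
  invFun y := (((y.2 - y.1)/2 - β)/e, (y.1 + y.2)/2)
  left_inv x := by
    ext
    · simp only; field_simp; ring
    · simp only; field_simp; ring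
  right_inv y := by
    ext
    · simp only; field_simp; ring
    · simp only; field_simp; ring

lemma card_conic (e β c : F) (he : e ≠ 0) (h2 : (2:F) ≠ 0) :
    Nat.card {x : F × F // e^2*x.1^2 + 2*e*β*x.1 + c = x.2^2} =
      if c = β^2 then 2 * Fintype.card F - 1 else Fintype.card F - 1 := by
  have hiff : ∀ x : F × F, (e^2*x.1^2 + 2*e*β*x.1 + c = x.2^2) ↔
      ((conicEquiv e β he h2 x).1 * (conicEquiv e β he h2 x).2 = c - β^2) := by
    intro x
    simp only [conicEquiv, Equiv.coe_fn_mk]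
    constructor <;> intro h
    · linear_combination -h
    · linear_combination -h
  have e1 : {x : F × F // e^2*x.1^2 + 2*e*β*x.1 + c = x.2^2} ≃
      {y : F × F // y.1 * y.2 = c - β^2} :=
    (conicEquiv e β he h2).subtypeEquiv hiff
  rcases eq_or_ne c (β^2) with h | h
  · rw [if_pos h]
    have h0 : c - β^2 = 0 := by rw [h]; ring
    rw [h0] at e1
    rw [Nat.card_congr e1, card_mul_eq_zero]
  · rw [if_neg h, Nat.card_congr e1, card_mul_eq_ne _ (sub_ne_zero.mpr h)]

lemma card_quadroots (e β c : F) (he : e ≠ 0) (h2 : (2:F) ≠ 0) :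
    Nat.card {A : F // e^2*A^2 + 2*e*β*A + c = 0} =
      if β^2 - c = 0 then 1 else if IsSquare (β^2 - c) then 2 else 0 := by
  have hiff : ∀ A : F, (e^2*A^2 + 2*e*β*A + c = 0) ↔ ((affEquiv e β he) A)^2 = β^2 - c := by
    intro A
    simp only [affEquiv, Equiv.coe_fn_mk]
    constructor <;> intro h
    · linear_combination h
    · linear_combination h
  rw [Nat.card_congr (Equiv.subtypeEquiv (affEquiv e β he)
    (q := fun x => x^2 = β^2 - c) hiff), card_sq_eq h2]

lemma card_lin (b c : F) (hb : b ≠ 0) : Nat.card {A : F // b*A + c = 0} = 1 := by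
  have hiff : ∀ A : F, (b*A + c = 0) ↔ A = -c/b := by
    intro A
    rw [eq_div_iff hb]
    constructor <;> intro h
    · linear_combination h
    · linear_combination h
  rw [Nat.card_congr (Equiv.subtypeEquivRight hiff), Nat.card_eq_fintype_card,
    Fintype.card_subtype_eq]

lemma card_linconic (b c : F) (hb : b ≠ 0) :
    Nat.card {x : F × F // b*x.1 + c = x.2^2} = Fintype.card F := by
  have e : {x : F × F // b*x.1 + c = x.2^2} ≃ F :=
  { toFun := fun x => x.1.2
    invFun := fun u => ⟨((u^2 - c)/b, u), by field_simp; ring⟩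
    left_inv := fun x => by
      apply Subtype.ext
      have h := x.2
      ext
      · simp only; field_simp; linear_combination -h
      · rfl
    right_inv := fun u => rfl }
  rw [Nat.card_congr e, Nat.card_eq_fintype_card]

lemma card_zeroconic :
    Nat.card {x : F × F // (0:F) = x.2^2} = Fintype.card F := by
  have e : {x : F × F // (0:F) = x.2^2} ≃ F :=
  { toFun := fun x => x.1.1
    invFun := fun a => ⟨(a, 0), by simp⟩
    left_inv := fun x => by
      apply Subtype.ext
      have h := x.2
      ext
      · rfl
      · simp only
        exact (pow_eq_zero_iff (two_ne_zero)).mp h.symm |>.symm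
    right_inv := fun a => rfl }
  rw [Nat.card_congr e, Nat.card_eq_fintype_card]

lemma TZN (h2 : (2:F) ≠ 0) (f : F → F) :
    Nat.card {x : F × F // f x.1 = x.2^2} =
      Nat.card {A : F // f A = 0} + 2 * Nat.card {A : F // ∃ u, u ≠ 0 ∧ f A = u^2} := by
  classical
  rw [natCard_prod_split]
  have hA : ∀ A : F, Nat.card {u : F // f A = u^2} =
      (if f A = 0 then 1 else 0) + 2 * (if ∃ u, u ≠ 0 ∧ f A = u^2 then 1 else 0) := by
    intro A
    have h : Nat.card {u : F // f A = u^2} = Nat.card {u : F // u^2 = f A} :=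
      Nat.card_congr (Equiv.subtypeEquivRight fun u => eq_comm)
    rw [h, card_sq_eq h2]
    by_cases h0 : f A = 0
    · rw [if_pos h0, if_pos h0, if_neg, mul_zero, add_zero]
      rintro ⟨u, hu, hu2⟩
      exact hu ((pow_eq_zero_iff two_ne_zero).mp (hu2 ▸ h0 ▸ rfl : u^2 = 0))
    · rw [if_neg h0, if_neg h0, zero_add]
      by_cases hs : IsSquare (f A)
      · rw [if_pos hs, if_pos, mul_one]
        obtain ⟨r, hr⟩ := hs
        refine ⟨r, ?_, by rw [hr]; ring⟩
        rintro rfl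
        exact h0 (by rw [hr, mul_zero])
      · rw [if_neg hs, if_neg, mul_zero]
        rintro ⟨u, hu, hu2⟩
        exact hs ⟨u, by rw [hu2]; ring⟩
  rw [Finset.sum_congr rfl (fun A _ => hA A), Finset.sum_add_distrib, ← Finset.mul_sum]
  congr 1
  · rw [natCard_filter, Finset.card_filter]
  · congr 1
    rw [natCard_filter, Finset.card_filter]

lemma isSquare_mul_sq_iff (k m : F) (hk : k ≠ 0) : IsSquare (k^2 * m) ↔ IsSquare m := by
  constructor
  · rintro ⟨r, hr⟩
    refine ⟨r/k, ?_⟩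
    field_simp
    linear_combination hr
  · rintro ⟨r, hr⟩
    exact ⟨k*r, by rw [hr]; ring⟩

lemma two_mul_card_sq (h2 : (2:F) ≠ 0) :
    2 * #(univ.filter fun m : F => m ≠ 0 ∧ IsSquare m) + 1 = Fintype.card F := by
  classical
  have hs : #(univ.filter fun y : F => y ≠ 0) = Fintype.card F - 1 := by
    have : (univ.filter fun y : F => y ≠ 0) = univ.erase 0 := by
      ext y; simp [Finset.mem_erase]
    rw [this, Finset.card_erase_of_mem (mem_univ 0), card_univ]
  have himg : (univ.filter fun y : F => y ≠ 0).image (fun y => y * y)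
      = univ.filter (fun m : F => m ≠ 0 ∧ IsSquare m) := by
    ext b
    simp only [mem_image, mem_filter, mem_univ, true_and]
    constructor
    · rintro ⟨y, hy, rfl⟩
      exact ⟨mul_ne_zero hy hy, ⟨y, rfl⟩⟩
    · rintro ⟨hb, r, hr⟩
      have hr0 : r ≠ 0 := by rintro rfl; exact hb (by rw [hr, mul_zero])
      exact ⟨r, hr0, hr.symm⟩
  have key := Finset.card_eq_sum_card_image (fun y : F => y * y)
      (univ.filter fun y : F => y ≠ 0)
  rw [himg] at key
  have hfib : ∀ b ∈ univ.filter (fun m : F => m ≠ 0 ∧ IsSquare m),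
      #((univ.filter fun y : F => y ≠ 0).filter fun y => y * y = b) = 2 := by
    intro b hb
    simp only [mem_filter, mem_univ, true_and] at hb
    obtain ⟨hb0, r, hr⟩ := hb
    have hr0 : r ≠ 0 := by rintro rfl; exact hb0 (by rw [hr, mul_zero])
    have : ((univ.filter fun y : F => y ≠ 0).filter fun y => y * y = b) = {r, -r} := by
      ext y
      simp only [mem_filter, mem_univ, true_and, mem_insert, mem_singleton]
      constructor
      · rintro ⟨hy, hyy⟩
        have hfac : (y - r) * (y + r) = 0 := by linear_combination hyy + hr
        rcases mul_eq_zero.mp hfac with h' | h'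
        · left; exact sub_eq_zero.mp h'
        · right; exact eq_neg_of_add_eq_zero_left h'
      · rintro (rfl | rfl)
        · exact ⟨hr0, hr.symm⟩
        · exact ⟨neg_ne_zero.mpr hr0, by rw [hr]; ring⟩
    rw [this, card_insert_of_notMem, card_singleton]
    simp only [mem_singleton]
    intro hc
    have h2r : 2 * r = 0 := by linear_combination hc
    rcases mul_eq_zero.mp h2r with h' | h'
    · exact h2 h'
    · exact hr0 h'
  rw [Finset.sum_congr rfl hfib, Finset.sum_const, smul_eq_mul] at key
  have hpos : 1 ≤ Fintype.card F := Fintype.card_pos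
  omega

end Counting

section FF
open Polynomial
variable {q : ℕ} {K L : Type*} [Field K] [Fintype K] [Field L] [Fintype L] [Algebra K L]

lemma descent_lemma (hq1 : 1 < q) (hK : Fintype.card K = q) (x : L)
    (hx : x ^ q = x) : ∃ y : K, algebraMap K L y = x := by
  classical
  by_contra hc
  push_neg at hc
  set f : Polynomial L := X ^ q - X with hf
  have hf0 : f ≠ 0 := FiniteField.X_pow_card_sub_X_ne_zero L hq1
  have hmem : ∀ z : L, z ^ q = z → z ∈ f.roots.toFinset := by
    intro z hz
    rw [Multiset.mem_toFinset, Polynomial.mem_roots hf0]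
    simp [hf, Polynomial.IsRoot, sub_eq_zero, hz]
  have hsub : insert x (univ.image (algebraMap K L)) ⊆ f.roots.toFinset := by
    intro z hz
    rcases Finset.mem_insert.mp hz with rfl | hz
    · exact hmem z hx
    · obtain ⟨y, _, rfl⟩ := Finset.mem_image.mp hz
      refine hmem _ ?_
      rw [← map_pow]
      congr 1
      rw [← hK]
      exact FiniteField.pow_card y
  have hcard : (insert x (univ.image (algebraMap K L))).card = q + 1 := by
    rw [Finset.card_insert_of_notMem, Finset.card_image_of_injective _
      (algebraMap K L).injective, card_univ, hK]
    intro hmem'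
    obtain ⟨y, _, hy⟩ := Finset.mem_image.mp hmem'
    exact hc y hy
  have h1 : q + 1 ≤ f.roots.toFinset.card := by
    rw [← hcard]; exact Finset.card_le_card hsub
  have h2 : f.roots.toFinset.card ≤ q := by
    calc f.roots.toFinset.card ≤ Multiset.card f.roots := Multiset.toFinset_card_le _
      _ ≤ f.natDegree := Polynomial.card_roots' f
      _ = q := FiniteField.X_pow_card_sub_X_natDegree_eq L hq1
  omega

lemma prim_root_exists (hq1 : 1 < q) (hL : Fintype.card L = q ^ 2) :
    ∃ ζ : L, IsPrimitiveRoot ζ (q + 1) := by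
  obtain ⟨g, hg⟩ := IsCyclic.exists_generator (α := Lˣ)
  have hq2 : 1 ≤ q ^ 2 := Nat.one_le_pow _ _ (by omega)
  have hord : orderOf g = q ^ 2 - 1 := by
    rw [orderOf_eq_card_of_forall_mem_zpowers hg, Nat.card_eq_fintype_card,
      Fintype.card_units, hL]
  refine ⟨((g ^ (q - 1) : Lˣ) : L), ?_⟩
  rw [IsPrimitiveRoot.coe_units_iff]
  have hfac : q ^ 2 - 1 = (q - 1) * (q + 1) := by
    zify [hq2, show 1 ≤ q by omega]
    ring
  have hgcd : Nat.gcd (q ^ 2 - 1) (q - 1) = q - 1 :=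
    Nat.gcd_eq_right ⟨q + 1, hfac⟩
  have hdiv : (q ^ 2 - 1) / (q - 1) = q + 1 := by
    rw [hfac, Nat.mul_div_cancel_left _ (by omega)]
  have hstep : orderOf (g ^ (q - 1)) = q + 1 := by
    rw [orderOf_pow, hord, hgcd, hdiv]
  rw [← hstep]
  exact IsPrimitiveRoot.orderOf _

lemma solv_lemma (hq1 : 1 < q) (hL : Fintype.card L = q ^ 2) (c : Lˣ)
    (hc : c ^ (q - 1) = 1) : ∃ α : Lˣ, α ^ (q + 1) = c := by
  obtain ⟨g, hg⟩ := IsCyclic.exists_generator (α := Lˣ)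
  have hq2 : 1 ≤ q ^ 2 := Nat.one_le_pow _ _ (by omega)
  have hord : orderOf g = q ^ 2 - 1 := by
    rw [orderOf_eq_card_of_forall_mem_zpowers hg, Nat.card_eq_fintype_card,
      Fintype.card_units, hL]
  obtain ⟨k, hk'⟩ := hg c
  have hk : g ^ k = c := hk'
  have h1 : g ^ (k * ((q : ℤ) - 1)) = 1 := by
    rw [zpow_mul, hk]
    have : ((q : ℤ) - 1) = ((q - 1 : ℕ) : ℤ) := by
      push_cast [Nat.cast_sub (show 1 ≤ q by omega)]; ring
    rw [this, zpow_natCast, hc]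
  have hdvd : ((q ^ 2 - 1 : ℕ) : ℤ) ∣ k * ((q : ℤ) - 1) := by
    rw [← hord]
    exact orderOf_dvd_iff_zpow_eq_one.mpr h1
  have hcast : ((q ^ 2 - 1 : ℕ) : ℤ) = ((q : ℤ) + 1) * ((q : ℤ) - 1) := by
    push_cast [Nat.cast_sub hq2]
    ring
  rw [hcast] at hdvd
  have hdvd2 : ((q : ℤ) + 1) ∣ k :=
    (mul_dvd_mul_iff_right (show (q : ℤ) - 1 ≠ 0 by
      have : (1 : ℤ) < q := by exact_mod_cast hq1
      omega)).mp hdvd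
  obtain ⟨j, hj⟩ := hdvd2
  refine ⟨g ^ j, ?_⟩
  rw [← zpow_natCast, ← zpow_mul, ← hk, hj]
  congr 1
  push_cast
  ring

lemma fiber_card (hq1 : 1 < q) (hK : Fintype.card K = q) (hL : Fintype.card L = q ^ 2)
    (m : K) (hm : m ≠ 0) :
    #(univ.filter fun B : L => B ^ (q + 1) = algebraMap K L m) = q + 1 := by
  classical
  set c : L := algebraMap K L m with hc
  have hc0 : c ≠ 0 := by
    rw [hc]
    intro h
    exact hm ((map_eq_zero_iff _ (algebraMap K L).injective).mp h)
  have hcu : (Units.mk0 c hc0) ^ (q - 1) = 1 := by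
    apply Units.ext
    simp only [Units.val_pow_eq_pow_val, Units.val_mk0, Units.val_one]
    rw [hc, ← map_pow]
    have h1 : m ^ (q - 1) = 1 := by
      rw [← hK]; exact FiniteField.pow_card_sub_one_eq_one m hm
    rw [h1, map_one]
  obtain ⟨α, hα⟩ := solv_lemma hq1 hL _ hcu
  have hsolv : ∃ z : L, z ^ (q + 1) = c := by
    refine ⟨α, ?_⟩
    have := congrArg (Units.val) hα
    simpa using this
  obtain ⟨ζ, hζ⟩ := prim_root_exists hq1 hL
  have hnodup := hζ.nthRoots_nodup (a := c) hc0
  have hcard := hζ.card_nthRoots c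
  rw [if_pos hsolv] at hcard
  have hset : (univ.filter fun B : L => B ^ (q + 1) = c)
      = (Polynomial.nthRoots (q+1) c).toFinset := by
    ext z
    rw [mem_filter, Multiset.mem_toFinset, Polynomial.mem_nthRoots (by omega)]
    simp
  rw [hset, Multiset.toFinset_card_of_nodup hnodup, hcard]

end FF

set_option maxHeartbeats 1000000 in
theorem stmt5 (p n q : ℕ) [Fact p.Prime] (hn : 0 < n) (hq : q = p ^ n) (hodd : Odd q)
    (K L : Type*) [Field K] [Fintype K] [Field L] [Fintype L] [Algebra K L]
    (hK : Fintype.card K = q) (hL : Fintype.card L = q ^ 2) :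
    Nat.card {x : L × K | ∃ u : K, u ≠ 0 ∧
      ((algebraMap K L x.2 + x.1 + x.1 ^ q - algebraMap K L x.2 * x.1 ^ (q + 1)) ^ 2 +
        8 * (algebraMap K L x.2 * x.1 ^ (q + 1)) -
        4 * (algebraMap K L x.2 * x.1 + algebraMap K L x.2 * x.1 ^ q + x.1 ^ (q + 1))) =
        (algebraMap K L u) ^ 2} =
      (q ^ 3 - 2 * q ^ 2 + 2 * q + 3) / 2 := by
  classical
  have hp : p.Prime := Fact.out
  -- characteristic of K is p
  obtain ⟨r, hrinst⟩ := CharP.exists K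
  haveI := hrinst
  have hrprime : r.Prime := CharP.char_is_prime K r
  obtain ⟨m0, -, hcard0⟩ := FiniteField.card K r
  have hpr : p = r := by
    have h1 : p ∣ r ^ (m0 : ℕ) := by
      rw [← hcard0, hK, hq]
      exact dvd_pow_self p hn.ne'
    exact (Nat.prime_dvd_prime_iff_eq hp hrprime).mp (hp.dvd_of_dvd_pow h1)
  subst hpr
  haveI : CharP L p := charP_of_injective_algebraMap (algebraMap K L).injective p
  have hp2 : p ≠ 2 := by
    rintro rfl
    rw [hq, Nat.odd_iff] at hodd
    have h2 : (2:ℕ) ∣ 2 ^ n := dvd_pow_self 2 hn.ne'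
    omega
  have h2K : (2 : K) ≠ 0 := by
    intro h
    have h2 : ((2:ℕ) : K) = 0 := by exact_mod_cast h
    have hd := (CharP.cast_eq_zero_iff K p 2).mp h2
    exact hp2 ((Nat.prime_dvd_prime_iff_eq hp Nat.prime_two).mp hd)
  have h4K : (4 : K) ≠ 0 := by
    have h : (4 : K) = 2 * 2 := by norm_num
    rw [h]; exact mul_ne_zero h2K h2K
  have hq1 : 1 < q := by rw [hq]; exact Nat.one_lt_pow hn.ne' hp.one_lt
  have hq3 : 3 ≤ q := by
    obtain ⟨r2, hr2⟩ := hodd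
    omega
  have hinj : Function.Injective (algebraMap K L) := (algebraMap K L).injective
  have hfrob : ∀ x y : L, (x + y) ^ q = x ^ q + y ^ q := by
    intro x y; rw [hq]; exact add_pow_char_pow x y p n
  have hpowL : ∀ x : L, x ^ (q * q) = x := by
    intro x
    have h := FiniteField.pow_card x
    rwa [hL, sq] at h
  have hdesc : ∀ x : L, x ^ q = x → ∃ y : K, algebraMap K L y = x := descent_lemma hq1 hK
  have data : ∀ B : L, ∃ t m' : K,
      algebraMap K L t = B + B ^ q ∧ algebraMap K L m' = B ^ (q + 1) := by
    intro B
    obtain ⟨t, ht⟩ := hdesc (B + B ^ q) (by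
      rw [hfrob, ← pow_mul, hpowL]; ring)
    obtain ⟨m', hm'⟩ := hdesc (B ^ (q + 1)) (by
      rw [← pow_mul]
      have h : (q + 1) * q = q * q + q := by ring
      rw [h, pow_add, hpowL, pow_succ]
      ring)
    exact ⟨t, m', ht, hm'⟩
  -- split the count over B
  have hstart : Nat.card {x : L × K | ∃ u : K, u ≠ 0 ∧
      ((algebraMap K L x.2 + x.1 + x.1 ^ q - algebraMap K L x.2 * x.1 ^ (q + 1)) ^ 2 +
        8 * (algebraMap K L x.2 * x.1 ^ (q + 1)) -
        4 * (algebraMap K L x.2 * x.1 + algebraMap K L x.2 * x.1 ^ q + x.1 ^ (q + 1))) =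
        (algebraMap K L u) ^ 2} =
      ∑ B : L, Nat.card {A : K // ∃ u : K, u ≠ 0 ∧
      ((algebraMap K L A + B + B ^ q - algebraMap K L A * B ^ (q + 1)) ^ 2 +
        8 * (algebraMap K L A * B ^ (q + 1)) -
        4 * (algebraMap K L A * B + algebraMap K L A * B ^ q + B ^ (q + 1))) =
        (algebraMap K L u) ^ 2} := by
    exact natCard_prod_split (fun x : L × K => ∃ u : K, u ≠ 0 ∧
      ((algebraMap K L x.2 + x.1 + x.1 ^ q - algebraMap K L x.2 * x.1 ^ (q + 1)) ^ 2 +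
        8 * (algebraMap K L x.2 * x.1 ^ (q + 1)) -
        4 * (algebraMap K L x.2 * x.1 + algebraMap K L x.2 * x.1 ^ q + x.1 ^ (q + 1))) =
        (algebraMap K L u) ^ 2)
  rw [hstart]
  -- per-B pairing: T_B = Z_B + 2 * N_B
  have key : ∀ B : L, Nat.card {x : K × K //
      ((algebraMap K L x.1 + B + B ^ q - algebraMap K L x.1 * B ^ (q + 1)) ^ 2 +
        8 * (algebraMap K L x.1 * B ^ (q + 1)) -
        4 * (algebraMap K L x.1 * B + algebraMap K L x.1 * B ^ q + B ^ (q + 1))) =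
        (algebraMap K L x.2) ^ 2} =
      Nat.card {A : K //
      ((algebraMap K L A + B + B ^ q - algebraMap K L A * B ^ (q + 1)) ^ 2 +
        8 * (algebraMap K L A * B ^ (q + 1)) -
        4 * (algebraMap K L A * B + algebraMap K L A * B ^ q + B ^ (q + 1))) = 0} +
      2 * Nat.card {A : K // ∃ u : K, u ≠ 0 ∧
      ((algebraMap K L A + B + B ^ q - algebraMap K L A * B ^ (q + 1)) ^ 2 +
        8 * (algebraMap K L A * B ^ (q + 1)) -
        4 * (algebraMap K L A * B + algebraMap K L A * B ^ q + B ^ (q + 1))) =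
        (algebraMap K L u) ^ 2} := by
    intro B
    obtain ⟨t, m', ht, hm'⟩ := data B
    have hBq : B ^ q = algebraMap K L t - B := by rw [ht]; ring
    have hDex : ∀ A : K,
        ((algebraMap K L A + B + B ^ q - algebraMap K L A * B ^ (q + 1)) ^ 2 +
         8 * (algebraMap K L A * B ^ (q + 1)) -
         4 * (algebraMap K L A * B + algebraMap K L A * B ^ q + B ^ (q + 1)))
        = algebraMap K L ((A + t - A*m')^2 + 8*(A*m') - 4*(A*t + m')) := by
      intro A
      rw [← hm', hBq]
      simp only [map_add, map_sub, map_mul, map_pow, map_ofNat]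
      ring
    have h1 : Nat.card {x : K × K //
        ((algebraMap K L x.1 + B + B ^ q - algebraMap K L x.1 * B ^ (q + 1)) ^ 2 +
          8 * (algebraMap K L x.1 * B ^ (q + 1)) -
          4 * (algebraMap K L x.1 * B + algebraMap K L x.1 * B ^ q + B ^ (q + 1))) =
          (algebraMap K L x.2) ^ 2} =
        Nat.card {x : K × K // (x.1 + t - x.1*m')^2 + 8*(x.1*m') - 4*(x.1*t + m') = x.2^2} := by
      refine Nat.card_congr (Equiv.subtypeEquivRight fun x => ?_)
      rw [hDex, ← map_pow]
      exact hinj.eq_iff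
    have h2 : Nat.card {A : K //
        ((algebraMap K L A + B + B ^ q - algebraMap K L A * B ^ (q + 1)) ^ 2 +
          8 * (algebraMap K L A * B ^ (q + 1)) -
          4 * (algebraMap K L A * B + algebraMap K L A * B ^ q + B ^ (q + 1))) = 0} =
        Nat.card {A : K // (A + t - A*m')^2 + 8*(A*m') - 4*(A*t + m') = 0} := by
      refine Nat.card_congr (Equiv.subtypeEquivRight fun A => ?_)
      rw [hDex]
      exact map_eq_zero_iff _ hinj
    have h3 : Nat.card {A : K // ∃ u : K, u ≠ 0 ∧
        ((algebraMap K L A + B + B ^ q - algebraMap K L A * B ^ (q + 1)) ^ 2 +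
          8 * (algebraMap K L A * B ^ (q + 1)) -
          4 * (algebraMap K L A * B + algebraMap K L A * B ^ q + B ^ (q + 1))) =
          (algebraMap K L u) ^ 2} =
        Nat.card {A : K // ∃ u : K, u ≠ 0 ∧
          (A + t - A*m')^2 + 8*(A*m') - 4*(A*t + m') = u^2} := by
      refine Nat.card_congr (Equiv.subtypeEquivRight fun A => ?_)
      refine exists_congr fun u => and_congr_right fun _ => ?_
      rw [hDex, ← map_pow]
      exact hinj.eq_iff
    rw [h1, h2, h3]
    exact TZN h2K (fun A => (A + t - A*m')^2 + 8*(A*m') - 4*(A*t + m'))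
  -- value of T_B
  have hTB : ∀ B : L, Nat.card {x : K × K //
      ((algebraMap K L x.1 + B + B ^ q - algebraMap K L x.1 * B ^ (q + 1)) ^ 2 +
        8 * (algebraMap K L x.1 * B ^ (q + 1)) -
        4 * (algebraMap K L x.1 * B + algebraMap K L x.1 * B ^ q + B ^ (q + 1))) =
        (algebraMap K L x.2) ^ 2} =
      (q - 1) + (if B ^ (q+1) = 1 then 1 else 0) + (if B = 0 then q else 0) := by
    intro B
    obtain ⟨t, m', ht, hm'⟩ := data B
    have hBq : B ^ q = algebraMap K L t - B := by rw [ht]; ring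
    have hDex : ∀ A : K,
        ((algebraMap K L A + B + B ^ q - algebraMap K L A * B ^ (q + 1)) ^ 2 +
         8 * (algebraMap K L A * B ^ (q + 1)) -
         4 * (algebraMap K L A * B + algebraMap K L A * B ^ q + B ^ (q + 1)))
        = algebraMap K L ((A + t - A*m')^2 + 8*(A*m') - 4*(A*t + m')) := by
      intro A
      rw [← hm', hBq]
      simp only [map_add, map_sub, map_mul, map_pow, map_ofNat]
      ring
    have h1 : Nat.card {x : K × K //
        ((algebraMap K L x.1 + B + B ^ q - algebraMap K L x.1 * B ^ (q + 1)) ^ 2 +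
          8 * (algebraMap K L x.1 * B ^ (q + 1)) -
          4 * (algebraMap K L x.1 * B + algebraMap K L x.1 * B ^ q + B ^ (q + 1))) =
          (algebraMap K L x.2) ^ 2} =
        Nat.card {x : K × K // (x.1 + t - x.1*m')^2 + 8*(x.1*m') - 4*(x.1*t + m') = x.2^2} := by
      refine Nat.card_congr (Equiv.subtypeEquivRight fun x => ?_)
      rw [hDex, ← map_pow]
      exact hinj.eq_iff
    rw [h1]
    by_cases hm1 : m' = 1
    · have hB1 : B ^ (q + 1) = 1 := by rw [← hm', hm1, map_one]
      have hB0 : B ≠ 0 := by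
        intro h
        rw [h, zero_pow (by omega : q + 1 ≠ 0)] at hB1
        exact one_ne_zero hB1.symm
      rw [if_pos hB1, if_neg hB0]
      subst hm1
      by_cases ht2 : t = 2
      · subst ht2
        have hiff : ∀ x : K × K, ((x.1 + 2 - x.1*1)^2 + 8*(x.1*1) - 4*(x.1*2 + 1) = x.2^2)
            ↔ ((0:K) = x.2^2) := by
          intro x
          constructor <;> intro h <;> linear_combination h
        rw [Nat.card_congr (Equiv.subtypeEquivRight hiff), card_zeroconic, hK]
        omega
      · have hb : (8 : K) - 4*t ≠ 0 := by
          intro h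
          apply ht2
          have h4 : (4:K) * (2 - t) = 0 := by linear_combination h
          rcases mul_eq_zero.mp h4 with h' | h'
          · exact absurd h' h4K
          · linear_combination -h'
        have hiff : ∀ x : K × K, ((x.1 + t - x.1*1)^2 + 8*(x.1*1) - 4*(x.1*t + 1) = x.2^2)
            ↔ (((8:K) - 4*t)*x.1 + (t^2 - 4) = x.2^2) := by
          intro x
          constructor <;> intro h <;> linear_combination h
        rw [Nat.card_congr (Equiv.subtypeEquivRight hiff), card_linconic _ _ hb, hK]
        omega
    · have he : (1:K) - m' ≠ 0 := fun h => hm1 (by linear_combination -h)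
      have hBn1 : B ^ (q + 1) ≠ 1 := by
        intro h
        exact hm1 (hinj (by rw [hm', h, map_one]))
      rw [if_neg hBn1]
      set β : K := (4*m' - t - t*m')/(1 - m') with hβ
      have hiff : ∀ x : K × K, ((x.1 + t - x.1*m')^2 + 8*(x.1*m') - 4*(x.1*t + m') = x.2^2)
          ↔ (((1:K)-m')^2*x.1^2 + 2*((1:K)-m')*β*x.1 + (t^2 - 4*m') = x.2^2) := by
        intro x
        have hd : ((1:K)-m')^2*x.1^2 + 2*((1:K)-m')*β*x.1 + (t^2 - 4*m')
            = (x.1 + t - x.1*m')^2 + 8*(x.1*m') - 4*(x.1*t + m') := by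
          rw [hβ]
          field_simp
          ring
        rw [← hd]
      rw [Nat.card_congr (Equiv.subtypeEquivRight hiff), card_conic _ _ _ he h2K, hK]
      by_cases hB0 : B = 0
      · have hm0 : m' = 0 := by
          apply hinj
          rw [hm', hB0, map_zero, zero_pow (by omega : q + 1 ≠ 0)]
        have ht0 : t = 0 := by
          apply hinj
          rw [ht, hB0, map_zero, zero_pow (by omega : q ≠ 0), add_zero]
        have hc : t^2 - 4*m' = β^2 := by
          rw [hβ, hm0, ht0]
          norm_num
        rw [if_pos hc, if_pos hB0]
        omega
      · have hm0 : m' ≠ 0 := by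
          intro h
          apply hB0
          have hz : B ^ (q+1) = 0 := by rw [← hm', h, map_zero]
          exact pow_eq_zero_iff (by omega : q + 1 ≠ 0) |>.mp hz
        have hBne1 : B ≠ 1 := by
          intro h
          exact hm1 (hinj (by rw [hm', h, one_pow, map_one]))
        have htm : m' - t + 1 ≠ 0 := by
          intro h0
          have hprod : (B - 1) * (B ^ q - 1) = 0 := by
            have hfa : (B - 1) * (B ^ q - 1) = B ^ (q+1) - (B + B ^ q) + 1 := by
              rw [pow_succ]; ring
            have hone : algebraMap K L m' - algebraMap K L t + 1
                = algebraMap K L (m' - t + 1) := by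
              simp [map_sub, map_add, map_one]
            rw [hfa, ← hm', ← ht, hone, h0, map_zero]
          rcases mul_eq_zero.mp hprod with h' | h'
          · exact hBne1 (by linear_combination h')
          · have hBq1 : B ^ q = 1 := by linear_combination h'
            have hB1' : B = 1 := by
              have h2' : B ^ (q*q) = 1 := by rw [pow_mul, hBq1, one_pow]
              rwa [hpowL] at h2'
            exact hBne1 hB1'
        have ht1 : t - 1 - m' ≠ 0 := by
          intro h; apply htm; linear_combination -h
        have hkey : (β^2 - (t^2 - 4*m')) * ((1:K) - m')^2 = 4*m'*(t - 1 - m')^2 := by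
          rw [hβ]
          field_simp
          ring
        have hcne : ¬ (t^2 - 4*m' = β^2) := by
          intro hc
          have h0' : (4:K)*m'*(t-1-m')^2 = 0 := by rw [← hkey, hc]; ring
          exact (mul_ne_zero (mul_ne_zero h4K hm0) (pow_ne_zero 2 ht1)) h0'
        rw [if_neg hcne, if_neg hB0]
        omega
  -- value of Z_B
  have hZB : ∀ B : L, Nat.card {A : K //
      ((algebraMap K L A + B + B ^ q - algebraMap K L A * B ^ (q + 1)) ^ 2 +
        8 * (algebraMap K L A * B ^ (q + 1)) -
        4 * (algebraMap K L A * B + algebraMap K L A * B ^ q + B ^ (q + 1))) = 0} =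
      (if B = 1 then q - 1 else 0) + (if B = 0 then 1 else 0) +
      (if B ^ (q+1) = 1 then 1 else 0) +
      (if (B ≠ 0 ∧ B ^ (q+1) ≠ 1 ∧ ∃ w : K, algebraMap K L w ^ 2 = B ^ (q+1)) then 2 else 0) := by
    intro B
    obtain ⟨t, m', ht, hm'⟩ := data B
    have hBq : B ^ q = algebraMap K L t - B := by rw [ht]; ring
    have hDex : ∀ A : K,
        ((algebraMap K L A + B + B ^ q - algebraMap K L A * B ^ (q + 1)) ^ 2 +
         8 * (algebraMap K L A * B ^ (q + 1)) -
         4 * (algebraMap K L A * B + algebraMap K L A * B ^ q + B ^ (q + 1)))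
        = algebraMap K L ((A + t - A*m')^2 + 8*(A*m') - 4*(A*t + m')) := by
      intro A
      rw [← hm', hBq]
      simp only [map_add, map_sub, map_mul, map_pow, map_ofNat]
      ring
    have h2 : Nat.card {A : K //
        ((algebraMap K L A + B + B ^ q - algebraMap K L A * B ^ (q + 1)) ^ 2 +
          8 * (algebraMap K L A * B ^ (q + 1)) -
          4 * (algebraMap K L A * B + algebraMap K L A * B ^ q + B ^ (q + 1))) = 0} =
        Nat.card {A : K // (A + t - A*m')^2 + 8*(A*m') - 4*(A*t + m') = 0} := by
      refine Nat.card_congr (Equiv.subtypeEquivRight fun A => ?_)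
      rw [hDex]
      exact map_eq_zero_iff _ hinj
    rw [h2]
    by_cases hB1 : B = 1
    · -- everything vanishes
      have hm1 : m' = 1 := by
        apply hinj
        rw [hm', hB1, one_pow, map_one]
      have ht2 : t = 2 := by
        apply hinj
        rw [ht, hB1, one_pow, map_ofNat]
        norm_num
      subst hm1; subst ht2
      have hall : ∀ A : K, (A + 2 - A*1)^2 + 8*(A*1) - 4*(A*2 + 1) = 0 := by
        intro A; ring
      rw [Nat.card_congr (Equiv.subtypeUnivEquiv hall), Nat.card_eq_fintype_card, hK]
      have hBp1 : B ^ (q+1) = 1 := by rw [hB1, one_pow]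
      rw [if_pos hB1, if_neg (by rw [hB1]; exact one_ne_zero), if_pos hBp1,
        if_neg (by rintro ⟨-, h, -⟩; exact h hBp1)]
      omega
    · by_cases hm1 : m' = 1
      · -- B^{q+1} = 1, B ≠ 1, so t ≠ 2, linear equation
        have hBp1 : B ^ (q + 1) = 1 := by rw [← hm', hm1, map_one]
        have hB0 : B ≠ 0 := by
          intro h
          rw [h, zero_pow (by omega : q + 1 ≠ 0)] at hBp1
          exact one_ne_zero hBp1.symm
        have ht2 : t ≠ 2 := by
          intro h
          apply hB1
          have h0 : m' - t + 1 = 0 := by rw [hm1, h]; ring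
          have hprod : (B - 1) * (B ^ q - 1) = 0 := by
            have hfa : (B - 1) * (B ^ q - 1) = B ^ (q+1) - (B + B ^ q) + 1 := by
              rw [pow_succ]; ring
            have hone : algebraMap K L m' - algebraMap K L t + 1
                = algebraMap K L (m' - t + 1) := by
              simp [map_sub, map_add, map_one]
            rw [hfa, ← hm', ← ht, hone, h0, map_zero]
          rcases mul_eq_zero.mp hprod with h' | h'
          · linear_combination h'
          · have hBq1 : B ^ q = 1 := by linear_combination h'
            have h2' : B ^ (q*q) = 1 := by rw [pow_mul, hBq1, one_pow]
            rwa [hpowL] at h2'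
        subst hm1
        have hb : (8 : K) - 4*t ≠ 0 := by
          intro h
          apply ht2
          have h4 : (4:K) * (2 - t) = 0 := by linear_combination h
          rcases mul_eq_zero.mp h4 with h' | h'
          · exact absurd h' h4K
          · linear_combination -h'
        have hiff : ∀ A : K, ((A + t - A*1)^2 + 8*(A*1) - 4*(A*t + 1) = 0)
            ↔ (((8:K) - 4*t)*A + (t^2 - 4) = 0) := by
          intro A
          constructor <;> intro h <;> linear_combination h
        rw [Nat.card_congr (Equiv.subtypeEquivRight hiff), card_lin _ _ hb]
        rw [if_neg hB1, if_neg hB0, if_pos hBp1,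
          if_neg (by rintro ⟨-, h, -⟩; exact h hBp1)]
      · -- m' ≠ 1
        have he : (1:K) - m' ≠ 0 := fun h => hm1 (by linear_combination -h)
        have hBn1 : B ^ (q + 1) ≠ 1 := by
          intro h
          exact hm1 (hinj (by rw [hm', h, map_one]))
        by_cases hB0 : B = 0
        · have hm0 : m' = 0 := by
            apply hinj
            rw [hm', hB0, map_zero, zero_pow (by omega : q + 1 ≠ 0)]
          have ht0 : t = 0 := by
            apply hinj
            rw [ht, hB0, map_zero, zero_pow (by omega : q ≠ 0), add_zero]
          subst hm0; subst ht0
          have hiff : ∀ A : K, ((A + 0 - A*0)^2 + 8*(A*0) - 4*(A*0 + 0) = 0)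
              ↔ ((1:K)^2*A^2 + 2*1*0*A + 0 = 0) := by
            intro A
            constructor <;> intro h <;> linear_combination h
          rw [Nat.card_congr (Equiv.subtypeEquivRight hiff),
            card_quadroots 1 0 0 one_ne_zero h2K]
          rw [if_pos (by norm_num), if_neg hB1, if_pos hB0, if_neg hBn1,
            if_neg (by rintro ⟨h, -, -⟩; exact h hB0)]
        · have hm0 : m' ≠ 0 := by
            intro h
            apply hB0
            have hz : B ^ (q+1) = 0 := by rw [← hm', h, map_zero]
            exact pow_eq_zero_iff (by omega : q + 1 ≠ 0) |>.mp hz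
          have htm : m' - t + 1 ≠ 0 := by
            intro h0
            have hprod : (B - 1) * (B ^ q - 1) = 0 := by
              have hfa : (B - 1) * (B ^ q - 1) = B ^ (q+1) - (B + B ^ q) + 1 := by
                rw [pow_succ]; ring
              have hone : algebraMap K L m' - algebraMap K L t + 1
                  = algebraMap K L (m' - t + 1) := by
                simp [map_sub, map_add, map_one]
              rw [hfa, ← hm', ← ht, hone, h0, map_zero]
            rcases mul_eq_zero.mp hprod with h' | h'
            · exact hB1 (by linear_combination h')
            · have hBq1 : B ^ q = 1 := by linear_combination h'
              have h2' : B ^ (q*q) = 1 := by rw [pow_mul, hBq1, one_pow]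
              rw [hpowL] at h2'
              exact hB1 h2'
          have ht1 : t - 1 - m' ≠ 0 := by
            intro h; apply htm; linear_combination -h
          set β : K := (4*m' - t - t*m')/(1 - m') with hβ
          have hiff : ∀ A : K, ((A + t - A*m')^2 + 8*(A*m') - 4*(A*t + m') = 0)
              ↔ (((1:K)-m')^2*A^2 + 2*((1:K)-m')*β*A + (t^2 - 4*m') = 0) := by
            intro A
            have hd : ((1:K)-m')^2*A^2 + 2*((1:K)-m')*β*A + (t^2 - 4*m')
                = (A + t - A*m')^2 + 8*(A*m') - 4*(A*t + m') := by
              rw [hβ]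
              field_simp
              ring
            rw [← hd]
          rw [Nat.card_congr (Equiv.subtypeEquivRight hiff),
            card_quadroots _ _ _ he h2K]
          have hkey : (β^2 - (t^2 - 4*m')) * ((1:K) - m')^2 = 4*m'*(t - 1 - m')^2 := by
            rw [hβ]
            field_simp
            ring
          have hcne : β^2 - (t^2 - 4*m') ≠ 0 := by
            intro hc
            have h0' : (4:K)*m'*(t-1-m')^2 = 0 := by rw [← hkey, hc]; ring
            exact (mul_ne_zero (mul_ne_zero h4K hm0) (pow_ne_zero 2 ht1)) h0'
          rw [if_neg hcne]
          set k : K := 2*(t - 1 - m')/(1 - m') with hk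
          have hk0 : k ≠ 0 := by
            rw [hk]
            exact div_ne_zero (mul_ne_zero h2K ht1) he
          have heq : β^2 - (t^2 - 4*m') = k^2 * m' := by
            rw [hβ, hk]
            field_simp
            ring
          rw [heq]
          simp only [isSquare_mul_sq_iff _ _ hk0]
          have hcond : (B ≠ 0 ∧ B ^ (q+1) ≠ 1 ∧ ∃ w : K, algebraMap K L w ^ 2 = B ^ (q+1))
              ↔ IsSquare m' := by
            constructor
            · rintro ⟨-, -, w, hw⟩
              have hw2 : w^2 = m' := by
                apply hinj
                rw [map_pow, hw, hm']
              exact ⟨w, by rw [← hw2]; ring⟩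
            · rintro ⟨r2, hr2⟩
              refine ⟨hB0, hBn1, r2, ?_⟩
              rw [← map_pow, ← hm']
              congr 1
              rw [hr2]; ring
          rw [if_neg hB1, if_neg hB0, if_neg hBn1]
          by_cases hsq : IsSquare m'
          · rw [if_pos hsq, if_pos (hcond.mpr hsq)]
          · rw [if_neg hsq, if_neg (fun h => hsq (hcond.mp h))]
  -- square counting in K
  set Msq : Finset K := univ.filter (fun y : K => y ≠ 0 ∧ y ≠ 1 ∧ IsSquare y) with hMsqdef
  set κ : ℕ := #Msq with hκdef
  have hκq : 2 * κ + 3 = q := by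
    have hsq2 := two_mul_card_sq (F := K) h2K
    rw [hK] at hsq2
    have h1 : Msq = (univ.filter fun y : K => y ≠ 0 ∧ IsSquare y).erase 1 := by
      ext x
      simp only [hMsqdef, mem_erase, mem_filter, mem_univ, true_and]
      tauto
    have h2 : (1:K) ∈ (univ.filter fun y : K => y ≠ 0 ∧ IsSquare y) := by
      simp only [mem_filter, mem_univ, true_and]
      exact ⟨one_ne_zero, IsSquare.one⟩
    have h3 : κ = #(univ.filter fun y : K => y ≠ 0 ∧ IsSquare y) - 1 := by
      rw [hκdef, h1, card_erase_of_mem h2]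
    have h4 : 1 ≤ #(univ.filter fun y : K => y ≠ 0 ∧ IsSquare y) := card_pos.mpr ⟨1, h2⟩
    omega
  have hfib1 : #(univ.filter fun B : L => B ^ (q+1) = 1) = q + 1 := by
    have h := fiber_card hq1 hK hL 1 one_ne_zero
    rw [map_one] at h
    exact h
  have hS4 : #(univ.filter fun B : L => B ≠ 0 ∧ B ^ (q+1) ≠ 1 ∧
      ∃ w : K, algebraMap K L w ^ 2 = B ^ (q+1)) = κ * (q + 1) := by
    have hset : (univ.filter fun B : L => B ≠ 0 ∧ B ^ (q+1) ≠ 1 ∧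
        ∃ w : K, algebraMap K L w ^ 2 = B ^ (q+1))
        = Msq.biUnion (fun y => univ.filter fun B : L => B ^ (q+1) = algebraMap K L y) := by
      ext B
      simp only [mem_filter, mem_univ, true_and, mem_biUnion]
      constructor
      · rintro ⟨hB0, hBn1, w, hw⟩
        obtain ⟨t, m', ht, hm'⟩ := data B
        refine ⟨m', ?_, hm'.symm⟩
        simp only [hMsqdef, mem_filter, mem_univ, true_and]
        refine ⟨?_, ?_, ?_⟩
        · intro h
          apply hB0
          have hz : B ^ (q+1) = 0 := by rw [← hm', h, map_zero]
          exact pow_eq_zero_iff (by omega : q + 1 ≠ 0) |>.mp hz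
        · intro h
          apply hBn1
          rw [← hm', h, map_one]
        · have hw2 : w^2 = m' := by
            apply hinj
            rw [map_pow, hw, hm']
          exact ⟨w, by rw [← hw2]; ring⟩
      · rintro ⟨m', hm'mem, hB⟩
        simp only [hMsqdef, mem_filter, mem_univ, true_and] at hm'mem
        obtain ⟨hm0, hm1, r2, hr2⟩ := hm'mem
        refine ⟨?_, ?_, ⟨r2, ?_⟩⟩
        · rintro rfl
          rw [zero_pow (by omega : q + 1 ≠ 0)] at hB
          exact hm0 (hinj (by rw [map_zero, ← hB]))
        · intro h
          rw [hB] at h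
          exact hm1 (hinj (by rw [h, map_one]))
        · rw [hB, ← map_pow]
          congr 1
          rw [hr2]; ring
    have hdisj : ∀ x ∈ Msq, ∀ y ∈ Msq, x ≠ y →
        Disjoint (univ.filter fun B : L => B ^ (q+1) = algebraMap K L x)
          (univ.filter fun B : L => B ^ (q+1) = algebraMap K L y) := by
      intro x hx y hy hxy
      rw [Finset.disjoint_left]
      intro B hBx hBy
      simp only [mem_filter, mem_univ, true_and] at hBx hBy
      exact hxy (hinj (by rw [← hBx, ← hBy]))
    rw [hset, card_biUnion hdisj]
    have hcongr : ∀ y ∈ Msq,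
        #(univ.filter fun B : L => B ^ (q+1) = algebraMap K L y) = q + 1 := by
      intro y hy
      simp only [hMsqdef, mem_filter, mem_univ, true_and] at hy
      exact fiber_card hq1 hK hL y hy.1
    rw [Finset.sum_congr rfl hcongr, Finset.sum_const, smul_eq_mul]
  -- sum of the T_B values
  have hTsum : ∑ B : L, Nat.card {x : K × K //
      ((algebraMap K L x.1 + B + B ^ q - algebraMap K L x.1 * B ^ (q + 1)) ^ 2 +
        8 * (algebraMap K L x.1 * B ^ (q + 1)) -
        4 * (algebraMap K L x.1 * B + algebraMap K L x.1 * B ^ q + B ^ (q + 1))) =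
        (algebraMap K L x.2) ^ 2} = q^2 * (q-1) + (q+1) + q := by
    rw [Finset.sum_congr rfl (fun B _ => hTB B), Finset.sum_add_distrib,
      Finset.sum_add_distrib]
    congr 1
    · congr 1
      · rw [Finset.sum_const, card_univ, hL, smul_eq_mul]
      · rw [← Finset.card_filter]
        exact hfib1
    · simp
  -- sum of the Z_B values
  have hZsum : ∑ B : L, Nat.card {A : K //
      ((algebraMap K L A + B + B ^ q - algebraMap K L A * B ^ (q + 1)) ^ 2 +
        8 * (algebraMap K L A * B ^ (q + 1)) -
        4 * (algebraMap K L A * B + algebraMap K L A * B ^ q + B ^ (q + 1))) = 0}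
      = (q - 1) + 1 + (q + 1) + 2 * (κ * (q+1)) := by
    rw [Finset.sum_congr rfl (fun B _ => hZB B), Finset.sum_add_distrib,
      Finset.sum_add_distrib, Finset.sum_add_distrib]
    congr 1
    · congr 1
      · congr 1
        · simp
        · simp
      · rw [← Finset.card_filter]
        exact hfib1
    · have h2' : ∀ B : L, (if (B ≠ 0 ∧ B ^ (q+1) ≠ 1 ∧
          ∃ w : K, algebraMap K L w ^ 2 = B ^ (q+1)) then 2 else 0)
          = 2 * (if (B ≠ 0 ∧ B ^ (q+1) ≠ 1 ∧
          ∃ w : K, algebraMap K L w ^ 2 = B ^ (q+1)) then 1 else 0) := by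
        intro B
        split_ifs <;> omega
      rw [Finset.sum_congr rfl (fun B _ => h2' B), ← Finset.mul_sum, ← Finset.card_filter,
        hS4]
  -- relate T, Z, N
  have hTZ : (∑ B : L, Nat.card {x : K × K //
      ((algebraMap K L x.1 + B + B ^ q - algebraMap K L x.1 * B ^ (q + 1)) ^ 2 +
        8 * (algebraMap K L x.1 * B ^ (q + 1)) -
        4 * (algebraMap K L x.1 * B + algebraMap K L x.1 * B ^ q + B ^ (q + 1))) =
        (algebraMap K L x.2) ^ 2})
      = (∑ B : L, Nat.card {A : K //
      ((algebraMap K L A + B + B ^ q - algebraMap K L A * B ^ (q + 1)) ^ 2 +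
        8 * (algebraMap K L A * B ^ (q + 1)) -
        4 * (algebraMap K L A * B + algebraMap K L A * B ^ q + B ^ (q + 1))) = 0})
      + 2 * (∑ B : L, Nat.card {A : K // ∃ u : K, u ≠ 0 ∧
      ((algebraMap K L A + B + B ^ q - algebraMap K L A * B ^ (q + 1)) ^ 2 +
        8 * (algebraMap K L A * B ^ (q + 1)) -
        4 * (algebraMap K L A * B + algebraMap K L A * B ^ q + B ^ (q + 1))) =
        (algebraMap K L u) ^ 2}) := by
    rw [Finset.sum_congr rfl (fun B _ => key B), Finset.sum_add_distrib, ← Finset.mul_sum]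
  set Nv : ℕ := ∑ B : L, Nat.card {A : K // ∃ u : K, u ≠ 0 ∧
      ((algebraMap K L A + B + B ^ q - algebraMap K L A * B ^ (q + 1)) ^ 2 +
        8 * (algebraMap K L A * B ^ (q + 1)) -
        4 * (algebraMap K L A * B + algebraMap K L A * B ^ q + B ^ (q + 1))) =
        (algebraMap K L u) ^ 2} with hNv
  have hEq : q^2*(q-1) + (q+1) + q = ((q - 1) + 1 + (q + 1) + 2 * (κ * (q+1))) + 2 * Nv := by
    rw [← hTsum, ← hZsum, hTZ]
  have hEqZ : (q:ℤ)^2*((q:ℤ)-1) + ((q:ℤ)+1) + (q:ℤ)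
      = (((q:ℤ)-1) + 1 + ((q:ℤ)+1) + 2*((κ:ℤ)*((q:ℤ)+1))) + 2 * (Nv:ℤ) := by
    have h1q : 1 ≤ q := by omega
    zify [h1q] at hEq
    exact hEq
  have hκZ : 2*(κ:ℤ) + 3 = (q:ℤ) := by exact_mod_cast hκq
  have hval : 2*(Nv:ℤ) + 2*(q:ℤ)^2 = (q:ℤ)^3 + 2*(q:ℤ) + 3 := by
    linear_combination -hEqZ - ((q:ℤ)+1)*hκZ
  have hvalN : 2*Nv + 2*q^2 = q^3 + 2*q + 3 := by exact_mod_cast hval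
  have h23 : 2*q^2 ≤ q^3 := by
    calc 2*q^2 ≤ q*q^2 := Nat.mul_le_mul_right _ (by omega)
    _ = q^3 := by ring
  generalize hA : q^3 = b at hvalN h23 ⊢
  generalize hB : q^2 = a at hvalN h23 ⊢
  omega
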